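/- For every positive integer k, cφ_k(3) = 3k² + 2k²·(k choose 2) + (k choose 3)², which equals k²(k⁴-6k³+49k²-48k+112)/36. -/

import Mathlib

open Finset PowerSeries

/-- The quadratic form `Q(m₁,…,m_r) = ∑ mᵢ² + ∑_{i<j} mᵢ mⱼ`. -/
def frobQ {r : ℕ} (v : Fin r → ℤ) : ℤ :=
  (∑ i, v i ^ 2) + ∑ i, ∑ j ∈ Finset.Ioi i, v i * v j

/-- The `n`-th coefficient of the theta series `∑_{m₁,…,m_{k-1} ∈ ℤ} q^{Q(m₁,…,m_{k-1})}`,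
i.e. the number of integer vectors of length `k-1` on which `Q` takes the value `n`. -/
noncomputable def frobThetaCoeff (k n : ℕ) : ℕ :=
  Nat.card {v : Fin (k - 1) → ℤ // frobQ v = (n : ℤ)}

/-- `c : ℕ → ℤ` is the coefficient sequence of the `k`-colored generalized Frobenius
partition generating function, i.e. `∑ c(n) qⁿ = (∑_{m ∈ ℤ^{k-1}} q^{Q(m)}) / ∏_{n≥1}(1-qⁿ)^k`
as formal power series: multiplying by a sufficiently long truncation of `∏ (1-qⁿ)^k`
recovers each theta coefficient. -/
def IsCphi (k : ℕ) (c : ℕ → ℤ) : Prop :=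
  ∀ n : ℕ,
    (PowerSeries.coeff (R := ℤ) n)
        ((PowerSeries.mk fun m => c m) *
          ∏ i ∈ Finset.range (n + 1), (1 - (PowerSeries.X : PowerSeries ℤ) ^ (i + 1)) ^ k) =
      frobThetaCoeff k n

/-! ### Counting machinery -/

abbrev Cd : Type := (Finset.Icc (-2:ℤ) 2)

noncomputable def Ncnt (r : ℕ) (a b : ℤ) : ℕ :=
  Fintype.card {f : Fin r → Cd // (∑ i, (f i : ℤ)) = a ∧ (∑ i, ((f i : ℤ))^2) = b}

lemma Ncnt_zero (a b : ℤ) : Ncnt 0 a b = if a = 0 ∧ b = 0 then 1 else 0 := by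
  unfold Ncnt
  split
  · rename_i h
    rw [Fintype.card_eq_one_iff]
    refine ⟨⟨fun i => i.elim0, by simp [h.1], by simp [h.2]⟩, ?_⟩
    rintro ⟨g, hg⟩
    ext i
    exact i.elim0
  · rename_i h
    rw [Fintype.card_eq_zero_iff]
    constructor
    rintro ⟨g, h1, h2⟩
    simp only [Finset.univ_eq_empty, Finset.sum_empty] at h1 h2
    exact h ⟨h1.symm, h2.symm⟩

lemma Ncnt_succ (r : ℕ) (a b : ℤ) :
    Ncnt (r+1) a b = ∑ x ∈ Finset.Icc (-2:ℤ) 2, Ncnt r (a - x) (b - x^2) := by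
  unfold Ncnt
  rw [← Finset.sum_coe_sort (Finset.Icc (-2:ℤ) 2)
    (fun x => Fintype.card {f : Fin r → Cd // (∑ i, (f i : ℤ)) = a - x ∧ (∑ i, ((f i : ℤ))^2) = b - x^2})]
  rw [← Fintype.card_sigma]
  apply Fintype.card_congr
  have e1 : {f : Fin (r+1) → Cd // (∑ i, (f i : ℤ)) = a ∧ (∑ i, ((f i : ℤ))^2) = b} ≃
      {p : Cd × (Fin r → Cd) //
        (∑ i, ((Fin.cons p.1 p.2 : Fin (r+1) → Cd) i : ℤ)) = a ∧
        (∑ i, (((Fin.cons p.1 p.2 : Fin (r+1) → Cd) i : ℤ))^2) = b} :=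
    ((Fin.consEquiv (fun _ => Cd)).subtypeEquiv (fun p => by rfl)).symm
  refine e1.trans ?_
  refine (Equiv.subtypeProdEquivSigmaSubtype
    (fun (x : Cd) (g : Fin r → Cd) =>
      (∑ i, ((Fin.cons x g : Fin (r+1) → Cd) i : ℤ)) = a ∧
      (∑ i, (((Fin.cons x g : Fin (r+1) → Cd) i : ℤ))^2) = b)).trans ?_
  apply Equiv.sigmaCongrRight
  intro x
  apply Equiv.subtypeEquivRight
  intro g
  have h1 : ∑ i, ((Fin.cons x g : Fin (r+1) → Cd) i : ℤ) = (x:ℤ) + ∑ i, (g i : ℤ) := by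
    rw [show (fun i => ((Fin.cons x g : Fin (r+1) → Cd) i : ℤ)) = Fin.cons (x : ℤ) (fun i => (g i : ℤ)) from Fin.comp_cons _ _ _]
    exact Fin.sum_cons _ _
  have h2 : ∑ i, (((Fin.cons x g : Fin (r+1) → Cd) i : ℤ))^2 = (x:ℤ)^2 + ∑ i, ((g i : ℤ))^2 := by
    have hc : (fun i => (((Fin.cons x g : Fin (r+1) → Cd) i : ℤ))^2) = Fin.cons ((x:ℤ)^2) (fun i => ((g i : ℤ))^2) := by
      rw [show (fun i => (((Fin.cons x g : Fin (r+1) → Cd) i : ℤ))^2) =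
        (fun z : ℤ => z^2) ∘ (fun i => ((Fin.cons x g : Fin (r+1) → Cd) i : ℤ)) from rfl]
      rw [show (fun i => ((Fin.cons x g : Fin (r+1) → Cd) i : ℤ)) = Fin.cons (x : ℤ) (fun i => (g i : ℤ)) from Fin.comp_cons _ _ _]
      exact Fin.comp_cons _ _ _
    rw [show (∑ i, (((Fin.cons x g : Fin (r+1) → Cd) i : ℤ))^2) = ∑ i : Fin (r+1), (Fin.cons ((x:ℤ)^2) (fun i => ((g i : ℤ))^2)) i from by rw [hc]]
    exact Fin.sum_cons _ _
  rw [h1, h2]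
  constructor
  · rintro ⟨hs, hq⟩; constructor <;> linarith
  · rintro ⟨hs, hq⟩; constructor <;> linarith

lemma Ncnt_of_lt {r : ℕ} {a b : ℤ} (h : b < |a|) : Ncnt r a b = 0 := by
  unfold Ncnt
  rw [Fintype.card_eq_zero_iff]
  constructor
  rintro ⟨f, hs, hq⟩
  have h1 : |a| ≤ ∑ i, |(f i : ℤ)| := by
    rw [← hs]; exact Finset.abs_sum_le_sum_abs _ _
  have h2 : ∑ i, |(f i : ℤ)| ≤ ∑ i, ((f i : ℤ))^2 := by
    apply Finset.sum_le_sum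
    intro i _
    rcases eq_or_ne ((f i : ℤ)) 0 with h0 | h0
    · simp [h0]
    · have h3 : 1 ≤ |(f i : ℤ)| := Int.one_le_abs h0
      calc |(f i : ℤ)| = 1 * |(f i : ℤ)| := by ring
        _ ≤ |(f i : ℤ)| * |(f i : ℤ)| := mul_le_mul_of_nonneg_right h3 (abs_nonneg _)
        _ = ((f i : ℤ))^2 := by rw [← abs_mul, ← sq, abs_sq]
  omega

lemma Ncnt_neg (r : ℕ) (a b : ℤ) : Ncnt r (-a) b = Ncnt r a b := by
  unfold Ncnt
  apply Fintype.card_congr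
  have mem : ∀ x : Cd, -(x:ℤ) ∈ Finset.Icc (-2:ℤ) 2 := by
    intro x; have := x.2; simp only [Finset.mem_Icc] at this ⊢; omega
  refine ⟨fun p => ⟨fun i => ⟨-(p.1 i : ℤ), mem _⟩, ?_, ?_⟩,
          fun p => ⟨fun i => ⟨-(p.1 i : ℤ), mem _⟩, ?_, ?_⟩, ?_, ?_⟩
  · show ∑ i, -(p.1 i : ℤ) = a
    simp only [Finset.sum_neg_distrib, p.2.1, neg_neg]
  · show ∑ i, (-(p.1 i : ℤ))^2 = b
    simp only [neg_sq]; exact p.2.2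
  · show ∑ i, -(p.1 i : ℤ) = -a
    simp only [Finset.sum_neg_distrib, p.2.1]
  · show ∑ i, (-(p.1 i : ℤ))^2 = b
    simp only [neg_sq]; exact p.2.2
  · intro p; ext i; simp
  · intro p; ext i; simp

lemma sum_Icc22 {M : Type*} [AddCommMonoid M] (F : ℤ → M) :
    ∑ x ∈ Finset.Icc (-2:ℤ) 2, F x = F (-2) + F (-1) + F 0 + F 1 + F 2 := by
  rw [show Finset.Icc (-2:ℤ) 2 = {-2,-1,0,1,2} from by decide]
  rw [Finset.sum_insert (by decide), Finset.sum_insert (by decide),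
    Finset.sum_insert (by decide), Finset.sum_insert (by decide), Finset.sum_singleton]
  simp [add_assoc]

lemma Ncnt_vals (r : ℕ) :
    Ncnt r 0 0 = 1 ∧
    (Ncnt r 1 1 : ℤ) = r ∧
    (Ncnt r 0 2 : ℤ) = r*(r-1) ∧
    2*(Ncnt r 2 2 : ℤ) = r*(r-1) ∧
    2*(Ncnt r 1 3 : ℤ) = r*(r-1)*(r-2) ∧
    6*(Ncnt r 3 3 : ℤ) = r*(r-1)*(r-2) ∧
    4*(Ncnt r 0 4 : ℤ) = r*(r-1)*(r-2)*(r-3) ∧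
    6*(Ncnt r 2 4 : ℤ) = r*(r-1)*(r-2)*(r-3) + 6*r ∧
    12*(Ncnt r 1 5 : ℤ) = r*(r-1)*(r-2)*(r-3)*(r-4) + 12*r*(r-1) ∧
    36*(Ncnt r 0 6 : ℤ) = r*(r-1)*(r-2)*(r-3)*(r-4)*(r-5) + 36*r*(r-1)*(r-2) := by
  induction r with
  | zero =>
    refine ⟨by rw [Ncnt_zero]; norm_num, ?_, ?_, ?_, ?_, ?_, ?_, ?_, ?_, ?_⟩ <;>
      rw [Ncnt_zero] <;> norm_num
  | succ r ih =>
    obtain ⟨i0, i1, i2, i3, i4, i5, i6, i7, i8, i9⟩ := ih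
    have e0 : Ncnt (r+1) 0 0 = Ncnt r 0 0 := by
      rw [Ncnt_succ, sum_Icc22]; norm_num [Ncnt_of_lt, Ncnt_neg]
    have e1 : Ncnt (r+1) 1 1 = Ncnt r 1 1 + Ncnt r 0 0 := by
      rw [Ncnt_succ, sum_Icc22]; norm_num [Ncnt_of_lt, Ncnt_neg]
    have e2 : Ncnt (r+1) 0 2 = Ncnt r 1 1 + Ncnt r 0 2 + Ncnt r 1 1 := by
      rw [Ncnt_succ, sum_Icc22]; norm_num [Ncnt_of_lt, Ncnt_neg]
    have e3 : Ncnt (r+1) 2 2 = Ncnt r 2 2 + Ncnt r 1 1 := by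
      rw [Ncnt_succ, sum_Icc22]; norm_num [Ncnt_of_lt, Ncnt_neg]
    have e4 : Ncnt (r+1) 1 3 = Ncnt r 2 2 + Ncnt r 1 3 + Ncnt r 0 2 := by
      rw [Ncnt_succ, sum_Icc22]; norm_num [Ncnt_of_lt, Ncnt_neg]
    have e5 : Ncnt (r+1) 3 3 = Ncnt r 3 3 + Ncnt r 2 2 := by
      rw [Ncnt_succ, sum_Icc22]; norm_num [Ncnt_of_lt, Ncnt_neg]
    have e6 : Ncnt (r+1) 0 4 = Ncnt r 1 3 + Ncnt r 0 4 + Ncnt r 1 3 := by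
      rw [Ncnt_succ, sum_Icc22]; norm_num [Ncnt_of_lt, Ncnt_neg]
    have e7 : Ncnt (r+1) 2 4 = Ncnt r 3 3 + Ncnt r 2 4 + Ncnt r 1 3 + Ncnt r 0 0 := by
      rw [Ncnt_succ, sum_Icc22]; norm_num [Ncnt_of_lt, Ncnt_neg]
    have e8 : Ncnt (r+1) 1 5 = Ncnt r 2 4 + Ncnt r 1 5 + Ncnt r 0 4 + Ncnt r 1 1 := by
      rw [Ncnt_succ, sum_Icc22]; norm_num [Ncnt_of_lt, Ncnt_neg]
    have e9 : Ncnt (r+1) 0 6 = Ncnt r 2 2 + Ncnt r 1 5 + Ncnt r 0 6 + Ncnt r 1 5 + Ncnt r 2 2 := by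
      rw [Ncnt_succ, sum_Icc22]; norm_num [Ncnt_of_lt, Ncnt_neg]
    push_cast
    refine ⟨by rw [e0, i0], ?_, ?_, ?_, ?_, ?_, ?_, ?_, ?_, ?_⟩
    · rw [e1, i0]; push_cast [i1]; ring
    · rw [e2]; push_cast; linear_combination i2 + 2*i1
    · rw [e3]; push_cast; linear_combination i3 + 2*i1
    · rw [e4]; push_cast; linear_combination i4 + i3 + 2*i2
    · rw [e5]; push_cast; linear_combination i5 + 3*i3
    · rw [e6]; push_cast; linear_combination i6 + 4*i4
    · rw [e7, i0]; push_cast; linear_combination i7 + i5 + 3*i4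
    · rw [e8]; push_cast; linear_combination 2*i7 + i8 + 3*i6 + 12*i1
    · rw [e9]; push_cast; linear_combination i9 + 6*i8 + 36*i3

/-! ### Theta coefficients -/

lemma sq_sum_tuple : ∀ (n : ℕ) (v : Fin n → ℤ),
    (∑ i, v i)^2 = ∑ i, v i^2 + 2 * ∑ i, ∑ j ∈ Finset.Ioi i, v i * v j := by
  intro n
  induction n with
  | zero => intro v; simp
  | succ n ih =>
    intro v
    rw [Fin.sum_univ_succ v, Fin.sum_univ_succ (fun i => v i ^ 2),
      Fin.sum_univ_succ (fun i => ∑ j ∈ Finset.Ioi i, v i * v j)]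
    rw [Fin.sum_Ioi_zero]
    simp_rw [Fin.sum_Ioi_succ]
    rw [← Finset.mul_sum]
    have h := ih (fun i => v i.succ)
    linear_combination h

lemma theta_eq (k n : ℕ) (hk : 0 < k) (hn : n ≤ 4) :
    frobThetaCoeff k n = Ncnt k 0 (2*n) := by
  have hk1 : k - 1 + 1 = k := Nat.succ_pred_eq_of_pos hk
  set r := k - 1 with hr
  unfold frobThetaCoeff
  have E1 : {v : Fin r → ℤ // frobQ v = (n:ℤ)} ≃
      {w : Fin (r+1) → ℤ // (∑ i, w i) = 0 ∧ (∑ i, (w i)^2) = 2*(n:ℤ)} := by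
    refine ⟨fun v => ⟨Fin.cons (-∑ i, v.1 i) v.1, ?_, ?_⟩,
            fun w => ⟨fun i => w.1 i.succ, ?_⟩, ?_, ?_⟩
    · rw [Fin.sum_cons]; ring
    · have hc : (fun i => ((Fin.cons (-∑ i, v.1 i) v.1 : Fin (r+1) → ℤ) i)^2) =
          Fin.cons ((∑ i, v.1 i)^2) (fun i => (v.1 i)^2) := by
        rw [show (fun i => ((Fin.cons (-∑ i, v.1 i) v.1 : Fin (r+1) → ℤ) i)^2) =
          (fun z : ℤ => z^2) ∘ (Fin.cons (-∑ i, v.1 i) v.1) from rfl, Fin.comp_cons]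
        rw [neg_sq]
        rfl
      rw [show (∑ i, ((Fin.cons (-∑ i, v.1 i) v.1 : Fin (r+1) → ℤ) i)^2) =
        ∑ i : Fin (r+1), (Fin.cons ((∑ i, v.1 i)^2) (fun i => (v.1 i)^2)) i from by rw [hc]]
      rw [Fin.sum_cons]
      have hq := v.2
      unfold frobQ at hq
      have hid := sq_sum_tuple r v.1
      linarith
    · have hs := w.2.1
      have hq := w.2.2
      rw [Fin.sum_univ_succ w.1] at hs
      rw [Fin.sum_univ_succ (fun i => (w.1 i)^2)] at hq
      have h0 : w.1 0 = -∑ i : Fin r, w.1 i.succ := by linarith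
      have h0sq : (w.1 0)^2 = (∑ i : Fin r, w.1 i.succ)^2 := by rw [h0]; ring
      unfold frobQ
      have hid := sq_sum_tuple r (fun i => w.1 i.succ)
      linarith
    · intro v
      apply Subtype.ext
      funext i
      simp [Fin.cons_succ]
    · intro w
      apply Subtype.ext
      have hs := w.2.1
      rw [Fin.sum_univ_succ w.1] at hs
      have h0 : w.1 0 = -∑ i : Fin r, w.1 i.succ := by linarith
      show Fin.cons (-∑ i : Fin r, w.1 i.succ) (fun i => w.1 i.succ) = w.1
      rw [← h0]
      exact Fin.cons_self_tail w.1
  have E2 : {w : Fin (r+1) → ℤ // (∑ i, w i) = 0 ∧ (∑ i, (w i)^2) = 2*(n:ℤ)} ≃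
      {f : Fin (r+1) → Cd // (∑ i, (f i : ℤ)) = 0 ∧ (∑ i, ((f i : ℤ))^2) = 2*(n:ℤ)} := by
    have bound : ∀ (w : Fin (r+1) → ℤ), (∑ i, (w i)^2) = 2*(n:ℤ) → ∀ i, w i ∈ Finset.Icc (-2:ℤ) 2 := by
      intro w hq i
      have h1 : (w i)^2 ≤ ∑ j, (w j)^2 :=
        Finset.single_le_sum (f := fun j => (w j)^2) (fun j _ => sq_nonneg _) (Finset.mem_univ i)
      have h2 : (w i)^2 ≤ 8 := by
        have : (2*(n:ℤ)) ≤ 8 := by exact_mod_cast by omega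
        linarith
      rw [Finset.mem_Icc]
      constructor <;> nlinarith
    refine ⟨fun w => ⟨fun i => ⟨w.1 i, bound w.1 w.2.2 i⟩, w.2.1, w.2.2⟩,
            fun f => ⟨fun i => (f.1 i : ℤ), f.2⟩, ?_, ?_⟩
    · intro w; rfl
    · intro f; apply Subtype.ext; funext i; rfl
  rw [Nat.card_congr (E1.trans E2), Nat.card_eq_fintype_card, hk1]
  rfl

/-! ### Power series coefficients -/

lemma coeff_osp (t k j : ℕ) (ht : 0 < t) :
    PowerSeries.coeff (R := ℤ) j ((1 - X ^ t) ^ k) =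
      if t ∣ j then (-1)^(j/t) * (k.choose (j/t) : ℤ) else 0 := by
  have h1 : ((1 : ℤ⟦X⟧) - X^t) = (-X^t) + 1 := by ring
  rw [h1, add_pow, map_sum]
  have h2 : ∀ i ∈ Finset.range (k+1),
      PowerSeries.coeff (R := ℤ) j ((-X^t : ℤ⟦X⟧)^i * 1^(k-i) * (k.choose i : ℤ⟦X⟧)) =
      if t*i = j then (-1)^i * (k.choose i : ℤ) else 0 := by
    intro i _
    have hm : ((-X^t : ℤ⟦X⟧))^i * 1^(k-i) * (k.choose i : ℤ⟦X⟧) =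
        PowerSeries.C (R := ℤ) ((-1)^i * (k.choose i : ℤ)) * X^(t*i) := by
      rw [map_mul, map_pow, map_neg, map_one, map_natCast, pow_mul]
      ring
    rw [hm, PowerSeries.coeff_C_mul, PowerSeries.coeff_X_pow]
    by_cases h : t*i = j
    · rw [if_pos h.symm, if_pos h]; ring
    · rw [if_neg (fun hh => h hh.symm), if_neg h, mul_zero]
  rw [Finset.sum_congr rfl h2]
  by_cases hd : t ∣ j
  · obtain ⟨m, rfl⟩ := hd
    rw [if_pos ⟨m, rfl⟩, Nat.mul_div_cancel_left m ht]
    have h3 : ∀ i ∈ Finset.range (k+1),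
        (if t*i = t*m then (-1:ℤ)^i * (k.choose i : ℤ) else 0) =
        (if i = m then (-1:ℤ)^i * (k.choose i : ℤ) else 0) := by
      intro i _
      congr 1
      exact propext ⟨fun h => Nat.eq_of_mul_eq_mul_left ht h, fun h => by rw [h]⟩
    rw [Finset.sum_congr rfl h3, Finset.sum_ite_eq' (Finset.range (k+1)) m]
    by_cases hm : m ∈ Finset.range (k+1)
    · rw [if_pos hm]
    · rw [if_neg hm]
      have : k < m := by simpa [Finset.mem_range, Nat.lt_succ_iff] using hm
      rw [Nat.choose_eq_zero_of_lt this]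
      norm_num
  · rw [if_neg hd]
    apply Finset.sum_eq_zero
    intro i _
    exact if_neg (fun h => hd ⟨i, h.symm⟩)

lemma cm (φ ψ : PowerSeries ℤ) (j : ℕ) :
    PowerSeries.coeff (R := ℤ) j (φ*ψ) =
      ∑ i ∈ Finset.range (j+1), PowerSeries.coeff (R := ℤ) i φ * PowerSeries.coeff (R := ℤ) (j-i) ψ := by
  rw [PowerSeries.coeff_mul, Finset.Nat.sum_antidiagonal_eq_sum_range_succ_mk]

lemma hA (k j : ℕ) : PowerSeries.coeff (R := ℤ) j ((1 - X : ℤ⟦X⟧)^k) = (-1)^j * (k.choose j : ℤ) := by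
  rw [show (X : ℤ⟦X⟧) = X^1 from (pow_one _).symm, coeff_osp 1 k j one_pos]
  norm_num

lemma choose2_cast (k : ℕ) : 2*(k.choose 2 : ℤ) = k*(k-1) := by
  induction k with
  | zero => norm_num
  | succ k ih =>
    rw [Nat.choose_succ_succ, Nat.choose_one_right]
    push_cast
    linear_combination ih

lemma choose3_cast (k : ℕ) : 6*(k.choose 3 : ℤ) = k*(k-1)*(k-2) := by
  induction k with
  | zero => norm_num
  | succ k ih =>
    rw [Nat.choose_succ_succ]
    push_cast
    linear_combination ih + 3*choose2_cast k

/-- For every positive integer `k`,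
`cφ_k(3) = 3k² + 2k²·(k choose 2) + (k choose 3)² = k²(k⁴-6k³+49k²-48k+112)/36`. -/
theorem cphi_value_at_three (k : ℕ) (hk : 0 < k) (c : ℕ → ℤ) (hc : IsCphi k c) :
    c 3 = 3 * (k : ℤ) ^ 2 + 2 * (k : ℤ) ^ 2 * (k.choose 2 : ℤ) + ((k.choose 3 : ℤ)) ^ 2 ∧
      36 * c 3 =
        (k : ℤ) ^ 2 * ((k : ℤ) ^ 4 - 6 * (k : ℤ) ^ 3 + 49 * (k : ℤ) ^ 2 - 48 * k + 112) := by
  -- theta values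
  obtain ⟨v0, v1, v2, v3, v4, v5, v6, v7, v8, v9⟩ := Ncnt_vals k
  have t0 : frobThetaCoeff k 0 = 1 := by
    have h := theta_eq k 0 hk (by norm_num)
    norm_num at h
    rw [h]; exact v0
  have t1 : (frobThetaCoeff k 1 : ℤ) = (k:ℤ)*(k-1) := by
    have h := theta_eq k 1 hk (by norm_num)
    norm_num at h
    rw [h]; exact v2
  have t2 : 4*(frobThetaCoeff k 2 : ℤ) = (k:ℤ)*(k-1)*(k-2)*(k-3) := by
    have h := theta_eq k 2 hk (by norm_num)
    norm_num at h
    rw [h]; exact v6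
  have t3 : 36*(frobThetaCoeff k 3 : ℤ) =
      (k:ℤ)*(k-1)*(k-2)*(k-3)*(k-4)*(k-5) + 36*(k:ℤ)*(k-1)*(k-2) := by
    have h := theta_eq k 3 hk (by norm_num)
    norm_num at h
    rw [h]; exact v9
  -- coefficient facts for the truncated eta products
  have hB0 : PowerSeries.coeff (R := ℤ) 0 ((1 - X^2 : ℤ⟦X⟧)^k) = 1 := by
    rw [coeff_osp 2 k 0 (by norm_num)]; norm_num
  have hB1 : PowerSeries.coeff (R := ℤ) 1 ((1 - X^2 : ℤ⟦X⟧)^k) = 0 := by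
    rw [coeff_osp 2 k 1 (by norm_num)]; norm_num
  have hB2 : PowerSeries.coeff (R := ℤ) 2 ((1 - X^2 : ℤ⟦X⟧)^k) = -(k:ℤ) := by
    rw [coeff_osp 2 k 2 (by norm_num)]; norm_num
  have hB3 : PowerSeries.coeff (R := ℤ) 3 ((1 - X^2 : ℤ⟦X⟧)^k) = 0 := by
    rw [coeff_osp 2 k 3 (by norm_num)]; norm_num
  have hC0 : PowerSeries.coeff (R := ℤ) 0 ((1 - X^3 : ℤ⟦X⟧)^k) = 1 := by
    rw [coeff_osp 3 k 0 (by norm_num)]; norm_num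
  have hC1 : PowerSeries.coeff (R := ℤ) 1 ((1 - X^3 : ℤ⟦X⟧)^k) = 0 := by
    rw [coeff_osp 3 k 1 (by norm_num)]; norm_num
  have hC2 : PowerSeries.coeff (R := ℤ) 2 ((1 - X^3 : ℤ⟦X⟧)^k) = 0 := by
    rw [coeff_osp 3 k 2 (by norm_num)]; norm_num
  have hC3 : PowerSeries.coeff (R := ℤ) 3 ((1 - X^3 : ℤ⟦X⟧)^k) = -(k:ℤ) := by
    rw [coeff_osp 3 k 3 (by norm_num)]; norm_num
  have hD0 : PowerSeries.coeff (R := ℤ) 0 ((1 - X^4 : ℤ⟦X⟧)^k) = 1 := by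
    rw [coeff_osp 4 k 0 (by norm_num)]; norm_num
  have hD1 : PowerSeries.coeff (R := ℤ) 1 ((1 - X^4 : ℤ⟦X⟧)^k) = 0 := by
    rw [coeff_osp 4 k 1 (by norm_num)]; norm_num
  have hD2 : PowerSeries.coeff (R := ℤ) 2 ((1 - X^4 : ℤ⟦X⟧)^k) = 0 := by
    rw [coeff_osp 4 k 2 (by norm_num)]; norm_num
  have hD3 : PowerSeries.coeff (R := ℤ) 3 ((1 - X^4 : ℤ⟦X⟧)^k) = 0 := by
    rw [coeff_osp 4 k 3 (by norm_num)]; norm_num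
  -- products
  have hAB0 : PowerSeries.coeff (R := ℤ) 0 (((1 - X : ℤ⟦X⟧)^k) * ((1 - X^2)^k)) = 1 := by
    rw [cm, Finset.sum_range_one]
    norm_num [hA, hB0]
  have hAB1 : PowerSeries.coeff (R := ℤ) 1 (((1 - X : ℤ⟦X⟧)^k) * ((1 - X^2)^k)) = -(k:ℤ) := by
    rw [cm, Finset.sum_range_succ, Finset.sum_range_one]
    norm_num [hA, hB0, hB1, Nat.choose_one_right]
  have hAB2 : PowerSeries.coeff (R := ℤ) 2 (((1 - X : ℤ⟦X⟧)^k) * ((1 - X^2)^k)) = (k.choose 2 : ℤ) - k := by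
    rw [cm, Finset.sum_range_succ, Finset.sum_range_succ, Finset.sum_range_one]
    norm_num [hA, hB0, hB1, hB2, Nat.choose_one_right]
    ring
  have hAB3 : PowerSeries.coeff (R := ℤ) 3 (((1 - X : ℤ⟦X⟧)^k) * ((1 - X^2)^k)) = (k:ℤ)^2 - (k.choose 3 : ℤ) := by
    rw [cm, Finset.sum_range_succ, Finset.sum_range_succ, Finset.sum_range_succ, Finset.sum_range_one]
    norm_num [hA, hB0, hB1, hB2, hB3, Nat.choose_one_right]
    ring
  have hE0 : PowerSeries.coeff (R := ℤ) 0 (((1 - X : ℤ⟦X⟧)^k) * ((1 - X^2)^k) * ((1 - X^3)^k)) = 1 := by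
    rw [cm, Finset.sum_range_one]
    norm_num [hAB0, hC0]
  have hE1 : PowerSeries.coeff (R := ℤ) 1 (((1 - X : ℤ⟦X⟧)^k) * ((1 - X^2)^k) * ((1 - X^3)^k)) = -(k:ℤ) := by
    rw [cm, Finset.sum_range_succ, Finset.sum_range_one]
    norm_num [hAB0, hAB1, hC0, hC1]
  have hE2 : PowerSeries.coeff (R := ℤ) 2 (((1 - X : ℤ⟦X⟧)^k) * ((1 - X^2)^k) * ((1 - X^3)^k)) = (k.choose 2 : ℤ) - k := by
    rw [cm, Finset.sum_range_succ, Finset.sum_range_succ, Finset.sum_range_one]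
    norm_num [hAB0, hAB1, hAB2, hC0, hC1, hC2]
  have hE3 : PowerSeries.coeff (R := ℤ) 3 (((1 - X : ℤ⟦X⟧)^k) * ((1 - X^2)^k) * ((1 - X^3)^k)) = (k:ℤ)^2 - (k.choose 3 : ℤ) - k := by
    rw [cm, Finset.sum_range_succ, Finset.sum_range_succ, Finset.sum_range_succ, Finset.sum_range_one]
    norm_num [hAB0, hAB1, hAB2, hAB3, hC0, hC1, hC2, hC3]
    ring
  have hG0 : PowerSeries.coeff (R := ℤ) 0 (((1 - X : ℤ⟦X⟧)^k) * ((1 - X^2)^k) * ((1 - X^3)^k) * ((1 - X^4)^k)) = 1 := by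
    rw [cm, Finset.sum_range_one]
    norm_num [hE0, hD0]
  have hG1 : PowerSeries.coeff (R := ℤ) 1 (((1 - X : ℤ⟦X⟧)^k) * ((1 - X^2)^k) * ((1 - X^3)^k) * ((1 - X^4)^k)) = -(k:ℤ) := by
    rw [cm, Finset.sum_range_succ, Finset.sum_range_one]
    norm_num [hE0, hE1, hD0, hD1]
  have hG2 : PowerSeries.coeff (R := ℤ) 2 (((1 - X : ℤ⟦X⟧)^k) * ((1 - X^2)^k) * ((1 - X^3)^k) * ((1 - X^4)^k)) = (k.choose 2 : ℤ) - k := by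
    rw [cm, Finset.sum_range_succ, Finset.sum_range_succ, Finset.sum_range_one]
    norm_num [hE0, hE1, hE2, hD0, hD1, hD2]
  have hG3 : PowerSeries.coeff (R := ℤ) 3 (((1 - X : ℤ⟦X⟧)^k) * ((1 - X^2)^k) * ((1 - X^3)^k) * ((1 - X^4)^k)) = (k:ℤ)^2 - (k.choose 3 : ℤ) - k := by
    rw [cm, Finset.sum_range_succ, Finset.sum_range_succ, Finset.sum_range_succ, Finset.sum_range_one]
    norm_num [hE0, hE1, hE2, hE3, hD0, hD1, hD2, hD3]
  -- the four linear equations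
  have h0 := hc 0
  rw [Finset.prod_range_one] at h0
  norm_num at h0
  -- h0 : c 0 = θ0
  have h1 := hc 1
  rw [Finset.prod_range_succ, Finset.prod_range_one] at h1
  norm_num at h1
  rw [cm, Finset.sum_range_succ, Finset.sum_range_one] at h1
  norm_num [hAB0, hAB1, PowerSeries.coeff_mk] at h1
  have h2 := hc 2
  rw [Finset.prod_range_succ, Finset.prod_range_succ, Finset.prod_range_one] at h2
  norm_num at h2
  rw [cm, Finset.sum_range_succ, Finset.sum_range_succ, Finset.sum_range_one] at h2
  norm_num [hE0, hE1, hE2, PowerSeries.coeff_mk] at h2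
  have h3 := hc 3
  rw [show (3:ℕ)+1 = 4 from rfl] at h3
  rw [Finset.prod_range_succ, Finset.prod_range_succ, Finset.prod_range_succ,
    Finset.prod_range_one] at h3
  norm_num at h3
  rw [cm, Finset.sum_range_succ, Finset.sum_range_succ, Finset.sum_range_succ,
    Finset.sum_range_one] at h3
  norm_num [hG0, hG1, hG2, hG3, PowerSeries.coeff_mk] at h3
  -- solve
  have hc0 : c 0 = 1 := by rw [h0, t0]; norm_num
  rw [hc0] at h1 h2 h3
  have hc1 : c 1 = (k:ℤ)^2 := by linear_combination h1 + t1
  have hc2v : 4 * c 2 = (k:ℤ)*(k-1)*(k-2)*(k-3) + 4*(k:ℤ)^3 - 2*(k:ℤ)*(k-1) + 4*(k:ℤ) := by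
    linear_combination 4*h2 + t2 + 4*(k:ℤ)*hc1 - 2*choose2_cast k
  have h36 : 36 * c 3 =
      (k : ℤ) ^ 2 * ((k : ℤ) ^ 4 - 6 * (k : ℤ) ^ 3 + 49 * (k : ℤ) ^ 2 - 48 * k + 112) := by
    linear_combination 36*h3 + t3 + 9*(k:ℤ)*hc2v + (-18*(c 1))*choose2_cast k +
      (36*(k:ℤ) - 18*(k:ℤ)*((k:ℤ)-1))*hc1 + 6*choose3_cast k
  refine ⟨?_, h36⟩
  have h36' : 36 * c 3 = 36 * (3 * (k : ℤ) ^ 2 + 2 * (k : ℤ) ^ 2 * (k.choose 2 : ℤ) + ((k.choose 3 : ℤ)) ^ 2) := by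
    linear_combination h36 - 36*(k:ℤ)^2*choose2_cast k -
      (6*(k.choose 3 : ℤ) + (k:ℤ)*((k:ℤ)-1)*((k:ℤ)-2))*choose3_cast k
  exact mul_left_cancel₀ (by norm_num : (36:ℤ) ≠ 0) h36'
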